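/- (Maximal function via telescoping along entropy scales.) Let $(f_k)_{k \in K}$ be a finite family of real numbers and $\lambda \mapsto N_\lambda$ its greedy jump-counting function. Then for any fixed $k_0 \in K$ and any $v_0 \in \mathbb{Z}$, $\max_{k \in K} |f_k| \leq |f_{k_0}| + 2^{-v_0} + C \sum_{v > v_0} 2^{-v} N_{2^{-v}}^{1/2}$ for an absolute constant $C$. More precisely, one has $\max_k |f_k| \leq |f_{k_0}| + \sum_{v \in \mathbb{Z} : 2^{-v} \leq 2\,\mathrm{diam}} C\, 2^{-v} N_{2^{-v}}^{1/2}$ where $\mathrm{diam} = \max_{k,k'} |f_k - f_{k'}|$. -/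
import Mathlib


noncomputable def jumpCount (f : ℤ → ℝ) (K : Finset ℤ) (lam : ℝ) : ℕ :=
  sSup {M : ℕ | ∃ k : Fin (M + 1) → ℤ, StrictMono k ∧ (∀ i, k i ∈ K) ∧
    ∀ i : Fin M, lam < |f (k i.succ) - f (k i.castSucc)|}

lemma jumpCount_aux_le (f : ℤ → ℝ) (K : Finset ℤ) (lam : ℝ) :
    ∀ M ∈ {M : ℕ | ∃ k : Fin (M + 1) → ℤ, StrictMono k ∧ (∀ i, k i ∈ K) ∧
      ∀ i : Fin M, lam < |f (k i.succ) - f (k i.castSucc)|}, M ≤ K.card := by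
  rintro M ⟨k, hmono, hmem, -⟩
  have hinj : Function.Injective (fun i : Fin (M+1) => (⟨k i, hmem i⟩ : {x // x ∈ K})) := by
    intro i j h
    exact hmono.injective (congrArg Subtype.val h)
  have h2 := Fintype.card_le_of_injective _ hinj
  simp only [Fintype.card_fin, Fintype.card_coe] at h2
  omega

lemma jumpCount_le_card (f : ℤ → ℝ) (K : Finset ℤ) (lam : ℝ) :
    jumpCount f K lam ≤ K.card :=
  csSup_le' (jumpCount_aux_le f K lam)

lemma one_le_jumpCount {f : ℤ → ℝ} {K : Finset ℤ} {lam : ℝ} {a b : ℤ}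
    (ha : a ∈ K) (hb : b ∈ K) (hab : a ≠ b) (h : lam < |f a - f b|) :
    1 ≤ jumpCount f K lam := by
  apply le_csSup ⟨K.card, jumpCount_aux_le f K lam⟩
  have hminmax : |f (max a b) - f (min a b)| = |f a - f b| := by
    rcases le_or_gt a b with h' | h'
    · simp [min_eq_left h', max_eq_right h', abs_sub_comm]
    · simp [min_eq_right h'.le, max_eq_left h'.le]
  refine ⟨![min a b, max a b], ?_, ?_, ?_⟩
  · intro i j hij
    fin_cases i <;> fin_cases j <;> simp_all
    exact fun h2 => hab h2.symm
  · intro i; fin_cases i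
    · simp [min_def]; split <;> simp [ha, hb]
    · simp [max_def]; split <;> simp [ha, hb]
  · intro i
    fin_cases i
    simpa [hminmax] using h

/-- Maximal function via telescoping along entropy scales: for any `k₀ ∈ K`,
`max_{k ∈ K} |f k| ≤ |f k₀| + C ∑_{v : 2^{-v} ≤ 2 diam} 2^{-v} N_{2^{-v}}^{1/2}`,
where `D` is (an upper bound for) the diameter `max_{k,k'} |f k - f k'|`. -/
theorem stmt14 :
    ∃ C : ℝ, 0 < C ∧ ∀ (f : ℤ → ℝ) (K : Finset ℤ), K.Nonempty →
      ∀ D : ℝ, (∀ k ∈ K, ∀ k' ∈ K, |f k - f k'| ≤ D) →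
      ∀ k₀ ∈ K, ∀ k ∈ K,
        |f k| ≤ |f k₀| + ∑' v : ℤ,
          (if (2:ℝ) ^ (-v) ≤ 2 * D then
            C * (2:ℝ) ^ (-v) * (jumpCount f K ((2:ℝ) ^ (-v)) : ℝ) ^ ((1:ℝ)/2)
          else 0) := by
  refine ⟨4, by norm_num, ?_⟩
  intro f K hK D hD k₀ hk₀ k hk
  set F : ℤ → ℝ := fun v =>
    (if (2:ℝ) ^ (-v) ≤ 2 * D then
      4 * (2:ℝ) ^ (-v) * (jumpCount f K ((2:ℝ) ^ (-v)) : ℝ) ^ ((1:ℝ)/2)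
    else 0) with hFdef
  have hF0 : ∀ v, 0 ≤ F v := by
    intro v
    simp only [hFdef]
    split
    · positivity
    · exact le_rfl
  have hδD : |f k - f k₀| ≤ D := hD k hk k₀ hk₀
  have habs : |f k| - |f k₀| ≤ |f k - f k₀| := abs_sub_abs_le_abs_sub _ _
  rcases eq_or_lt_of_le (abs_nonneg (f k - f k₀)) with hδ0 | hδpos
  · have : 0 ≤ ∑' v, F v := tsum_nonneg hF0
    linarith
  · -- δ > 0
    set δ := |f k - f k₀| with hδdef
    have hDpos : 0 < D := lt_of_lt_of_le hδpos hδD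
    set a : ℤ := ⌈-Real.logb 2 (2*D)⌉ with hadef
    have hcond : ∀ v : ℤ, (2:ℝ)^(-v) ≤ 2*D → a ≤ v := by
      intro v hv
      have h1 : Real.logb 2 ((2:ℝ)^(-v)) ≤ Real.logb 2 (2*D) := by
        rw [Real.logb_le_logb (by norm_num) (by positivity) (by positivity)]
        exact hv
      rw [← Real.rpow_intCast, Real.logb_rpow (by norm_num) (by norm_num)] at h1
      push_cast at h1
      rw [Int.ceil_le]
      linarith
    have hsum : Summable F := by
      have hinj : Function.Injective (fun n : ℕ => a + (n:ℤ)) := by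
        intro m n h; simpa using h
      rw [← Function.Injective.summable_iff hinj]
      · -- Summable (F ∘ (a + ·))
        have hgeo : Summable (fun n : ℕ =>
            (4 * ((K.card:ℝ)) ^ ((1:ℝ)/2) * (2:ℝ)^(-a)) * (1/2:ℝ)^n) :=
          Summable.mul_left _ (summable_geometric_of_lt_one (by norm_num) (by norm_num))
        refine Summable.of_nonneg_of_le (fun n => hF0 _) ?_ hgeo
        · intro n
          simp only [Function.comp, hFdef]
          split
          · have h2 : ((jumpCount f K ((2:ℝ)^(-(a+(n:ℤ)))) : ℝ)) ^ ((1:ℝ)/2)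
                ≤ ((K.card:ℝ)) ^ ((1:ℝ)/2) := by
              apply Real.rpow_le_rpow (by positivity) _ (by norm_num)
              exact_mod_cast jumpCount_le_card f K _
            have h3 : (2:ℝ)^(-(a+(n:ℤ))) = (2:ℝ)^(-a) * (1/2:ℝ)^n := by
              rw [neg_add, zpow_add₀ (two_ne_zero)]
              congr 1
              rw [zpow_neg, zpow_natCast, ← inv_pow, one_div]
            rw [h3] at h2 ⊢
            have hp1 : (0:ℝ) < (2:ℝ)^(-a) := by positivity
            have hp2 : (0:ℝ) < (1/2:ℝ)^n := by positivity
            nlinarith [mul_nonneg (sub_nonneg.mpr h2) (mul_pos hp1 hp2).le]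
          · positivity
      · intro x hx
        simp only [hFdef]
        rw [if_neg]
        intro hcx
        apply hx
        have hax := hcond x hcx
        refine ⟨(x - a).toNat, ?_⟩
        show a + ((x - a).toNat : ℤ) = x
        omega
    -- the chosen scale
    set m : ℤ := ⌊Real.logb 2 δ⌋ with hmdef
    have h2δ : (2:ℝ) ^ (Real.logb 2 δ) = δ := Real.rpow_logb (by norm_num) (by norm_num) hδpos
    have hlt : (2:ℝ)^(m-1) < δ := by
      calc (2:ℝ)^(m-1) = (2:ℝ)^(((m:ℝ)-1)) := by
            rw [← Real.rpow_intCast]; push_cast; ring_nf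
        _ < (2:ℝ)^(Real.logb 2 δ) := by
            apply Real.rpow_lt_rpow_of_exponent_lt (by norm_num)
            have := Int.floor_le (Real.logb 2 δ)
            linarith
        _ = δ := h2δ
    have hgt : δ/4 < (2:ℝ)^(m-1) := by
      calc δ/4 = (2:ℝ)^(Real.logb 2 δ - 2) := by
            rw [Real.rpow_sub (by norm_num), h2δ]; norm_num
        _ < (2:ℝ)^(((m:ℝ)-1)) := by
            apply Real.rpow_lt_rpow_of_exponent_lt (by norm_num)
            have := Int.sub_one_lt_floor (Real.logb 2 δ)
            linarith
        _ = (2:ℝ)^(m-1) := by rw [← Real.rpow_intCast]; push_cast; ring_nf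
    set v : ℤ := 1 - m with hvdef
    have hnegv : -v = m - 1 := by omega
    have hcv : (2:ℝ)^(-v) ≤ 2*D := by
      rw [hnegv]; linarith
    have hne : k ≠ k₀ := by
      intro h
      have hz : δ = 0 := by rw [hδdef, h]; simp
      linarith
    have hN : 1 ≤ jumpCount f K ((2:ℝ)^(-v)) := by
      apply one_le_jumpCount hk hk₀ hne
      rw [hnegv]; exact hlt
    have hN' : (1:ℝ) ≤ ((jumpCount f K ((2:ℝ)^(-v)) : ℝ)) ^ ((1:ℝ)/2) :=
      Real.one_le_rpow (by exact_mod_cast hN) (by norm_num)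
    have hFv : δ ≤ F v := by
      rw [hnegv] at hN'
      simp only [hFdef]
      rw [if_pos hcv, hnegv]
      have h0 : (0:ℝ) < (2:ℝ)^(m-1) := by positivity
      nlinarith [mul_nonneg (sub_nonneg.mpr hN') h0.le, hgt]
    have hle : F v ≤ ∑' w, F w := Summable.le_tsum hsum v (fun j _ => hF0 j)
    linarith
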